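/- Let 𝔤 be a finite-dimensional real Lie algebra whose Killing form κ is negative definite (κ(x,x) < 0 for all x ≠ 0). Then the degenerate kernel space K(λ) equals all of 𝔤 if and only if λ = 0. Equivalently: T_0 is the zero operator, and for every nonzero λ ∈ 𝔤* there exists v ∈ 𝔤 with T_λ(v) ≠ 0. -/

import Mathlib

/-- The Spencer prolongation map: `T_λ(v)(w₁)(w₂) = ½(λ⁅w₁,⁅w₂,v⁆⁆ + λ⁅w₂,⁅w₁,v⁆⁆)`. -/
noncomputable def spencerT {L : Type} [LieRing L] [LieAlgebra ℝ L]
    (lam : Module.Dual ℝ L) (v w₁ w₂ : L) : ℝ :=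
  (1 / 2) * (lam ⁅w₁, ⁅w₂, v⁆⁆ + lam ⁅w₂, ⁅w₁, v⁆⁆)

/-- The degenerate kernel space `K(λ) = ker T_λ`, as a subspace of `𝔤`. -/
noncomputable def spencerK (L : Type) [LieRing L] [LieAlgebra ℝ L]
    (lam : Module.Dual ℝ L) : Submodule ℝ L where
  carrier := {v | ∀ w₁ w₂ : L, spencerT lam v w₁ w₂ = 0}
  zero_mem' := by intro w₁ w₂; simp [spencerT]
  add_mem' := by
    intro a b ha hb w₁ w₂
    have h1 := ha w₁ w₂
    have h2 := hb w₁ w₂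
    simp only [spencerT, lie_add, map_add] at h1 h2 ⊢
    linarith
  smul_mem' := by
    intro c v hv w₁ w₂
    have h := hv w₁ w₂
    simp only [spencerT, lie_smul, map_smul, smul_eq_mul] at h ⊢
    linear_combination c * h


lemma spencer_key {L : Type} [LieRing L] [LieAlgebra ℝ L] [Module.Finite ℝ L]
    (hneg : ∀ x : L, x ≠ 0 → killingForm ℝ L x x < 0)
    (lam : Module.Dual ℝ L)
    (hz : ∀ v w₁ w₂ : L, spencerT lam v w₁ w₂ = 0) :
    lam = 0 := by
  have hnd : (killingForm ℝ L).Nondegenerate := by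
    refine ⟨fun x hx => ?_, fun x hx => ?_⟩ <;>
    · by_contra hne
      exact absurd (hx x) (ne_of_lt (hneg x hne))
  set h : L := ((killingForm ℝ L).toDual hnd).symm lam with hh
  have hrep : ∀ y : L, killingForm ℝ L h y = lam y := fun y =>
    LinearMap.BilinForm.apply_toDual_symm_apply (hB := hnd) lam y
  have hinv : ∀ x y z : L, killingForm ℝ L ⁅x, y⁆ z = killingForm ℝ L x ⁅y, z⁆ :=
    fun x y z => LieModule.traceForm_apply_lie_apply ℝ L L x y z
  -- lam ⁅h, z⁆ = 0
  have hlh : ∀ z : L, lam ⁅h, z⁆ = 0 := by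
    intro z
    have := hinv h h z
    simp only [lie_self] at this
    rw [← hrep]
    rw [← this]
    simp
  -- from hz with w₁ = h : lam ⁅w₂, ⁅h, v⁆⁆ = 0
  have h2 : ∀ v w₂ : L, lam ⁅w₂, ⁅h, v⁆⁆ = 0 := by
    intro v w₂
    have := hz v h w₂
    simp only [spencerT] at this
    have h0 := hlh ⁅w₂, v⁆
    nlinarith [this, h0]
  -- hence κ(⁅h,w₂⁆, ⁅h,v⁆) = 0
  have h3 : ∀ v : L, ⁅h, v⁆ = 0 := by
    intro v
    have := h2 v v
    rw [← hrep] at this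
    rw [← hinv h v ⁅h, v⁆] at this
    by_contra hne
    exact absurd this (ne_of_lt (hneg _ hne))
  have hadh : LieAlgebra.ad ℝ L h = 0 := by
    ext v; simpa using h3 v
  have hk : killingForm ℝ L h h = 0 := by
    rw [killingForm_apply_apply, hadh]
    simp
  have hh0 : h = 0 := by
    by_contra hne
    exact absurd hk (ne_of_lt (hneg h hne))
  ext y
  rw [← hrep y, hh0]
  simp

/-- For a finite-dimensional real Lie algebra with negative definite Killing form,
the degenerate kernel space `K(λ)` is all of `𝔤` iff `λ = 0`; equivalently, `T_0 = 0`
and for every nonzero `λ` there is `v` with `T_λ(v) ≠ 0`. -/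
theorem spencerK_eq_top_iff_lambda_eq_zero
    {L : Type} [LieRing L] [LieAlgebra ℝ L] [Module.Finite ℝ L]
    (hneg : ∀ x : L, x ≠ 0 → killingForm ℝ L x x < 0) :
    (∀ lam : Module.Dual ℝ L, spencerK L lam = ⊤ ↔ lam = 0) ∧
    (∀ v w₁ w₂ : L, spencerT (0 : Module.Dual ℝ L) v w₁ w₂ = 0) ∧
    (∀ lam : Module.Dual ℝ L, lam ≠ 0 →
      ∃ v w₁ w₂ : L, spencerT lam v w₁ w₂ ≠ 0) := by
  refine ⟨fun lam => ⟨fun htop => ?_, fun hl => ?_⟩, fun v w₁ w₂ => by simp [spencerT], fun lam hne => ?_⟩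
  · exact spencer_key hneg lam fun v => (Submodule.eq_top_iff'.mp htop v)
  · subst hl
    rw [Submodule.eq_top_iff']
    intro v w₁ w₂
    simp [spencerT]
  · by_contra hcon
    push_neg at hcon
    exact hne (spencer_key hneg lam fun v w₁ w₂ => hcon v w₁ w₂)
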